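/- Let f_1, ..., f_k : [0,1] → ℝ be affine functions and let g : [0,1] → ℝ be affine. If for every x ∈ [0,1] there exists i with f_i(x) > g(x), then there exist nonnegative weights r_1, ..., r_k summing to 1, with at most two of them nonzero, such that ∑ r_i f_i(x) > g(x) for all x ∈ [0,1]. -/
import Mathlib

open Finset

private lemma core {k : ℕ} (u v : Fin k → ℝ)
    (hx : ∀ s : ℝ, 0 ≤ s → s ≤ 1 → ∃ j, 0 < (1 - s) * u j + s * v j) :
    ∃ i j : Fin k, ∃ t : ℝ, 0 ≤ t ∧ t ≤ 1 ∧ (i = j → t = 1) ∧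
      0 < t * u i + (1 - t) * u j ∧ 0 < t * v i + (1 - t) * v j := by
  obtain ⟨i0, hi0⟩ := hx 0 le_rfl zero_le_one
  have hu0 : 0 < u i0 := by linarith
  by_cases hone : ∃ i, 0 < u i ∧ 0 < v i
  · obtain ⟨i, h1, h2⟩ := hone
    exact ⟨i, i, 1, zero_le_one, le_rfl, fun _ => rfl, by linarith, by linarith⟩
  · push_neg at hone
    set P : Finset (Fin k) := univ.filter (fun i => 0 < u i) with hP
    have hPne : P.Nonempty := ⟨i0, by simp [hP, hu0]⟩
    obtain ⟨i, hiP, hmax⟩ := Finset.exists_max_image P (fun i => u i / (u i - v i)) hPne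
    have hiu : 0 < u i := by simpa [hP] using hiP
    have hiv : v i ≤ 0 := by
      by_contra hc
      exact absurd (hone i hiu) (by push_neg; linarith)
    have hden : 0 < u i - v i := by linarith
    set s := u i / (u i - v i) with hsdef
    have hs0 : 0 < s := div_pos hiu hden
    have hs1 : s ≤ 1 := by rw [hsdef, div_le_one hden]; linarith
    have hmul : s * (u i - v i) = u i := div_mul_cancel₀ _ hden.ne'
    have hieq : (1 - s) * u i + s * v i = 0 := by nlinarith [hmul]
    obtain ⟨j, hjs⟩ := hx s hs0.le hs1
    have hju : u j ≤ 0 := by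
      by_contra hc
      push_neg at hc
      have hjv : v j ≤ 0 := hone j hc
      have hjmem : j ∈ P := by simp [hP, hc]
      have hle : u j / (u j - v j) ≤ s := hmax j hjmem
      have hdj : 0 < u j - v j := by linarith
      rw [div_le_iff₀ hdj] at hle
      nlinarith
    have hjv : 0 < v j := by
      by_contra hc
      push_neg at hc
      nlinarith [mul_nonneg (by linarith : (0:ℝ) ≤ 1 - s) (by linarith : 0 ≤ -u j),
        mul_nonneg hs0.le (by linarith : 0 ≤ -v j)]
    have hij : i ≠ j := fun hE => by rw [hE] at hiu; linarith
    have e1 : u j * ((1 - s) * u i + s * v i) = 0 := by rw [hieq]; ring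
    have hBD : u j * v i < u i * v j := by
      nlinarith [mul_pos hiu hjs, e1, hs0]
    have hSig : 0 < u i - u j + (v j - v i) := by linarith
    refine ⟨i, j, (v j - u j) / (u i - u j + (v j - v i)), div_nonneg (by linarith) hSig.le,
      by rw [div_le_one hSig]; linarith, fun hE => absurd hE hij, ?_, ?_⟩
    · have key : (v j - u j) / (u i - u j + (v j - v i)) * u i
          + (1 - (v j - u j) / (u i - u j + (v j - v i))) * u j
          = (u i * v j - u j * v i) / (u i - u j + (v j - v i)) := by
        field_simp
        ring
      rw [key]
      exact div_pos (by linarith) hSig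
    · have key : (v j - u j) / (u i - u j + (v j - v i)) * v i
          + (1 - (v j - u j) / (u i - u j + (v j - v i))) * v j
          = (u i * v j - u j * v i) / (u i - u j + (v j - v i)) := by
        field_simp
        ring
      rw [key]
      exact div_pos (by linarith) hSig

private lemma build {k : ℕ} (a b : Fin k → ℝ) (c d : ℝ) (i j : Fin k) (t : ℝ)
    (ht0 : 0 ≤ t) (ht1 : t ≤ 1) (hij : i = j → t = 1)
    (h0 : 0 < t * (b i - d) + (1 - t) * (b j - d))
    (h1 : 0 < t * (a i + b i - (c + d)) + (1 - t) * (a j + b j - (c + d))) :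
    ∃ r : Fin k → ℝ, (∀ i, 0 ≤ r i) ∧ ∑ i, r i = 1 ∧
      (Finset.univ.filter (fun i => r i ≠ 0)).card ≤ 2 ∧
      ∀ x ∈ Set.Icc (0:ℝ) 1, ∑ i, r i * (a i * x + b i) > c * x + d := by
  set r : Fin k → ℝ := fun m => if m = i then t else if m = j then 1 - t else 0 with hrdef
  have hsum : ∀ w : Fin k → ℝ, ∑ m, r m * w m = t * w i + (1 - t) * w j := by
    intro w
    have hr : ∀ m, r m * w m
        = (if i = m then t * w i else 0) + (if j = m then (1 - t) * w j else 0) := by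
      intro m
      rcases eq_or_ne m i with hmi | hmi
      · subst hmi
        rcases eq_or_ne m j with hmj | hmj
        · have ht : t = 1 := hij hmj
          simp [hrdef, ← hmj, ht]
        · simp [hrdef, hmj.symm]
      · rcases eq_or_ne m j with hmj | hmj
        · subst hmj
          simp [hrdef, hmi, hmi.symm]
        · simp [hrdef, hmi, hmj, hmi.symm, hmj.symm]
    rw [Finset.sum_congr rfl (fun m _ => hr m), Finset.sum_add_distrib]
    simp [Finset.sum_ite_eq]
  refine ⟨r, ?_, ?_, ?_, ?_⟩
  · intro m
    simp only [hrdef]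
    split_ifs <;> linarith
  · have h := hsum (fun _ => 1)
    simp only [mul_one] at h
    rw [h]; ring
  · have hsub : (Finset.univ.filter (fun m => r m ≠ 0)) ⊆ {i, j} := by
      intro m hm
      simp only [Finset.mem_filter] at hm
      simp only [Finset.mem_insert, Finset.mem_singleton]
      by_contra hc
      push_neg at hc
      exact hm.2 (by simp [hrdef, hc.1, hc.2])
    calc (Finset.univ.filter (fun m => r m ≠ 0)).card ≤ ({i, j} : Finset (Fin k)).card :=
          Finset.card_le_card hsub
      _ ≤ 2 := by
          refine le_trans (Finset.card_insert_le i {j}) ?_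
          simp
  · intro x hx
    rw [hsum (fun m => a m * x + b m)]
    have h2 : 0 < (1 - x) * (t * (b i - d) + (1 - t) * (b j - d))
        + x * (t * (a i + b i - (c + d)) + (1 - t) * (a j + b j - (c + d))) := by
      rcases lt_or_ge x 1 with hxlt | hxge
      · have := mul_pos (by linarith : (0:ℝ) < 1 - x) h0
        nlinarith [mul_nonneg hx.1 h1.le]
      · have hx1 : x = 1 := le_antisymm hx.2 hxge
        subst hx1
        simpa using h1
    nlinarith [h2]

theorem stmt_0 (k : ℕ) (a b : Fin k → ℝ) (c d : ℝ)
    (h : ∀ x ∈ Set.Icc (0:ℝ) 1, ∃ i, a i * x + b i > c * x + d) :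
    ∃ r : Fin k → ℝ, (∀ i, 0 ≤ r i) ∧ ∑ i, r i = 1 ∧
      (Finset.univ.filter (fun i => r i ≠ 0)).card ≤ 2 ∧
      ∀ x ∈ Set.Icc (0:ℝ) 1, ∑ i, r i * (a i * x + b i) > c * x + d := by
  have hx : ∀ s : ℝ, 0 ≤ s → s ≤ 1 →
      ∃ j, 0 < (1 - s) * (b j - d) + s * (a j + b j - (c + d)) := by
    intro s hs0 hs1
    obtain ⟨j, hj⟩ := h s ⟨hs0, hs1⟩
    exact ⟨j, by nlinarith [hj]⟩
  obtain ⟨i, j, t, ht0, ht1, hij, h0, h1⟩ :=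
    core (fun m => b m - d) (fun m => a m + b m - (c + d)) hx
  exact build a b c d i j t ht0 ht1 hij h0 h1
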